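/- Let 𝒩 be a nest on a complex Hilbert space H and k ≥ 1 an integer. Then Z(τ(𝒩))_k = ℂ·I: an operator W ∈ τ(𝒩) satisfies [W, X]_k = 0 for all X ∈ τ(𝒩) if and only if W is a complex scalar multiple of the identity operator. -/

import Mathlib

/-- The iterated commutator: `iterComm 0 x y = x`, `iterComm (i+1) x y = [iterComm i x y, y]`. -/
def iterComm {G : Type*} [Ring G] : ℕ → G → G → G
  | 0, x, _ => x
  | i + 1, x, y => iterComm i x y * y - y * iterComm i x y

/-- The nest algebra `τ(𝒩) = {T ∈ B(H) : T(N) ⊆ N for all N ∈ 𝒩}`, as a subalgebra of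
the algebra `B(H) = H →L[ℂ] H` of bounded operators. -/
def nestAlg {H : Type*} [NormedAddCommGroup H] [InnerProductSpace ℂ H]
    (𝒩 : Set (Submodule ℂ H)) : Subalgebra ℂ (H →L[ℂ] H) where
  carrier := {T | ∀ N ∈ 𝒩, ∀ x ∈ N, T x ∈ N}
  mul_mem' := by
    intro a b ha hb N hN x hx
    exact ha N hN _ (hb N hN x hx)
  add_mem' := by
    intro a b ha hb N hN x hx
    simpa using N.add_mem (ha N hN x hx) (hb N hN x hx)
  algebraMap_mem' := by
    intro c N hN x hx
    simp only [Algebra.algebraMap_eq_smul_one, ContinuousLinearMap.smul_apply,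
      ContinuousLinearMap.one_apply]
    exact N.smul_mem c hx

set_option synthInstance.maxHeartbeats 1000000
set_option maxHeartbeats 2000000

lemma iterComm_three {G : Type*} [Ring G] (a e : G) (he : e * e = e) :
    iterComm 3 a e = iterComm 1 a e := by
  have he' : ∀ x : G, e * (e * x) = e * x := fun x => by rw [← mul_assoc, he]
  simp only [iterComm, mul_sub, sub_mul, mul_assoc, he, he']
  abel

lemma iterComm_two_add {G : Type*} [Ring G] (a e : G) (he : e * e = e) :
    ∀ j, 1 ≤ j → iterComm (j + 2) a e = iterComm j a e := by
  intro j hj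
  induction j, hj using Nat.le_induction with
  | base => exact iterComm_three a e he
  | succ n hn ih =>
      show iterComm (n + 2) a e * e - e * iterComm (n + 2) a e = _
      rw [ih]; rfl

lemma idem_reduce {G : Type*} [Ring G] (a e : G) (he : e * e = e) :
    ∀ k, 1 ≤ k → iterComm k a e = 0 → iterComm 1 a e = 0
  | 1, _, h => h
  | 2, _, h => by
      have h3 : iterComm 3 a e = 0 := by
        show iterComm 2 a e * e - e * iterComm 2 a e = 0
        rw [h]; simp
      rw [← iterComm_three a e he]; exact h3
  | (m + 3), _, h => by
      have h2 := iterComm_two_add a e he (m + 1) (by omega)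
      exact idem_reduce a e he (m + 1) (by omega) (by rw [← h2]; exact h)

lemma iterComm_map {G G' : Type*} [Ring G] [Ring G'] (f : G →+* G') (k : ℕ) (x y : G) :
    f (iterComm k x y) = iterComm k (f x) (f y) := by
  induction k with
  | zero => rfl
  | succ n ih =>
      show f (iterComm n x y * y - y * iterComm n x y) = _
      rw [map_sub, map_mul, map_mul, ih]; rfl

lemma scalar_iterComm {G : Type*} [Ring G] [Algebra ℂ G] (c : ℂ) (X : G) :
    ∀ k, 1 ≤ k → iterComm k (c • (1 : G)) X = 0 := by
  intro k hk
  induction k, hk using Nat.le_induction with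
  | base =>
      show c • (1 : G) * X - X * (c • 1) = 0
      rw [smul_mul_assoc, mul_smul_comm, one_mul, mul_one, sub_self]
  | succ n hn ih =>
      show iterComm n _ X * X - X * iterComm n _ X = 0
      rw [ih]; simp

/-- for a nest `𝒩` on a complex Hilbert space `H` and `k ≥ 1`,
`Z(τ(𝒩))_k = ℂ·I`: an operator `W ∈ τ(𝒩)` satisfies `[W, X]_k = 0` for all `X ∈ τ(𝒩)`
if and only if `W` is a complex scalar multiple of the identity operator. -/
theorem Zk_nestAlgebra_eq_scalars
    {H : Type*} [NormedAddCommGroup H] [InnerProductSpace ℂ H] [CompleteSpace H]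
    (𝒩 : Set (Submodule ℂ H))
    (hclosed : ∀ N ∈ 𝒩, IsClosed (N : Set H))
    (hbot : ⊥ ∈ 𝒩) (htop : ⊤ ∈ 𝒩)
    (hchain : ∀ N₁ ∈ 𝒩, ∀ N₂ ∈ 𝒩, N₁ ≤ N₂ ∨ N₂ ≤ N₁)
    (hinf : ∀ S ⊆ 𝒩, S.Nonempty → sInf S ∈ 𝒩)
    (hsup : ∀ S ⊆ 𝒩, S.Nonempty → (sSup S).topologicalClosure ∈ 𝒩)
    (k : ℕ) (hk : 1 ≤ k)
    (W : nestAlg 𝒩) :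
    (∀ X : nestAlg 𝒩, iterComm k W X = 0) ↔
    (∃ c : ℂ, W = c • (1 : nestAlg 𝒩)) := by
  constructor
  swap
  · rintro ⟨c, rfl⟩ X
    exact scalar_iterComm c X k hk
  intro hX
  set W₀ : H →L[ℂ] H := (W : H →L[ℂ] H) with hW₀
  -- W commutes with every idempotent of the nest algebra
  have hcomm : ∀ E : H →L[ℂ] H, E ∈ nestAlg 𝒩 → E * E = E → W₀ * E = E * W₀ := by
    intro E hE hEE
    have h0 : iterComm k W₀ E = 0 := by
      have h := hX ⟨E, hE⟩
      have h2 := iterComm_map ((nestAlg 𝒩).val.toRingHom) k W ⟨E, hE⟩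
      rw [h, map_zero] at h2
      exact h2.symm
    have h1 := idem_reduce W₀ E hEE k hk h0
    have h2 : W₀ * E - E * W₀ = 0 := by simpa [iterComm] using h1
    exact sub_eq_zero.mp h2
  -- helper : from a • x = b • y with a ≠ 0 deduce x = (b/a) • y
  have div_smul : ∀ (a b : ℂ) (x y : H), a ≠ 0 → a • x = b • y → x = (b / a) • y := by
    intro a b x y ha h
    have : a⁻¹ • (a • x) = a⁻¹ • (b • y) := by rw [h]
    rwa [smul_smul, smul_smul, inv_mul_cancel₀ ha, one_smul, ← div_eq_inv_mul] at this
  -- key lemma : for N ∈ 𝒩 closed, u ∈ N, v ∈ Nᗮ, W commutes with the rank one u ⊗ v*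
  have key : ∀ N ∈ 𝒩, ∀ u ∈ N, ∀ v ∈ Nᗮ, ∀ x : H,
      (inner ℂ v x : ℂ) • W₀ u = (inner ℂ v (W₀ x) : ℂ) • u := by
    intro N hN u hu v hv x
    haveI : CompleteSpace N := (hclosed N hN).completeSpace_coe
    set P : H →L[ℂ] H := N.subtypeL.comp (N.orthogonalProjectionOnto) with hPdef
    have hPapp : ∀ y, P y = (N.orthogonalProjectionOnto y : H) := fun _ => rfl
    have hPid : ∀ y ∈ N, P y = y := fun y hy => by
      rw [hPapp]; exact N.starProjection_eq_self_iff.2 hy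
    have hPmem : ∀ y, P y ∈ N := fun y => SetLike.coe_mem _
    set R : H →L[ℂ] H := (innerSL ℂ v).smulRight u with hRdef
    have hRapp : ∀ y, R y = (inner ℂ v y : ℂ) • u := fun _ => rfl
    have hvN : ∀ y ∈ N, (inner ℂ v y : ℂ) = 0 := fun y hy =>
      (Submodule.mem_orthogonal' N v).mp hv y hy
    have hPmemAlg : P ∈ nestAlg 𝒩 := by
      intro N' hN' y hy
      rcases hchain N hN N' hN' with h | h
      · exact h (hPmem y)
      · rw [hPid y (h hy)]; exact hy
    have hRmemAlg : R ∈ nestAlg 𝒩 := by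
      intro N' hN' y hy
      rcases hchain N hN N' hN' with h | h
      · rw [hRapp]; exact N'.smul_mem _ (h hu)
      · have h0 : (inner ℂ v y : ℂ) = 0 := hvN y (h hy)
        rw [hRapp, h0, zero_smul]; exact N'.zero_mem
    have hPP : P * P = P := by
      ext y
      simp only [ContinuousLinearMap.mul_apply]
      exact hPid _ (hPmem y)
    have hPR : ∀ y, P (R y) = R y := fun y => by
      rw [hRapp, map_smul, hPid u hu]
    have hRP : ∀ y, R (P y) = 0 := fun y => by
      rw [hRapp, hvN _ (hPmem y), zero_smul]
    have hRR : ∀ y, R (R y) = 0 := fun y => by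
      rw [hRapp y, map_smul, hRapp u, hvN u hu, zero_smul, smul_zero]
    set E : H →L[ℂ] H := P + R with hEdef
    have hEmem : E ∈ nestAlg 𝒩 := add_mem hPmemAlg hRmemAlg
    have hEE : E * E = E := by
      ext y
      simp only [ContinuousLinearMap.mul_apply, ContinuousLinearMap.add_apply, hEdef]
      rw [map_add, map_add, hPid _ (hPmem y), hPR, hRP, hRR]
      abel
    have hWP := hcomm P hPmemAlg hPP
    have hWE := hcomm E hEmem hEE
    have hWR : W₀ * R = R * W₀ := by
      have h1 : W₀ * P + W₀ * R = P * W₀ + R * W₀ := by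
        rw [← mul_add, ← add_mul, ← hEdef, hWE]
      rw [hWP] at h1
      exact add_left_cancel h1
    have h2 : W₀ (R x) = R (W₀ x) := by
      have := congrArg (fun T : H →L[ℂ] H => T x) hWR
      simpa [ContinuousLinearMap.mul_apply] using this
    rw [hRapp, hRapp, map_smul] at h2
    exact h2
  -- trivial space case
  by_cases htriv : (⊥ : Submodule ℂ H) = ⊤
  · refine ⟨0, Subtype.ext ?_⟩
    ext x
    have hx : x ∈ (⊥ : Submodule ℂ H) := htriv.symm ▸ Submodule.mem_top
    have hx0 : x = 0 := by simpa using hx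
    subst hx0
    simp
  -- the set of proper nest elements and its closed span
  set S : Set (Submodule ℂ H) := {N | N ∈ 𝒩 ∧ N ≠ ⊤} with hSdef
  by_cases hM : (sSup S).topologicalClosure = ⊤
  · -- closure of proper elements is everything : dense argument
    have hSne : ∃ N₀, N₀ ∈ 𝒩 ∧ N₀ ≠ ⊤ ∧ N₀ ≠ ⊥ := by
      by_contra hcon
      push_neg at hcon
      have hle : sSup S ≤ ⊥ := sSup_le (fun N hN => le_of_eq (hcon N hN.1 hN.2))
      have hb : sSup S = ⊥ := le_bot_iff.1 hle
      have hcl : (sSup S).topologicalClosure = ⊥ := by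
        rw [hb]
        apply IsClosed.submodule_topologicalClosure_eq
        rw [Submodule.bot_coe]; exact isClosed_singleton
      exact htriv (by rw [← hcl, hM])
    obtain ⟨N₀, hN₀, hN₀top, hN₀bot⟩ := hSne
    haveI : CompleteSpace N₀ := (hclosed N₀ hN₀).completeSpace_coe
    obtain ⟨u₀, hu₀, hu₀0⟩ := (Submodule.ne_bot_iff _).mp hN₀bot
    have horthne : N₀ᗮ ≠ ⊥ := fun h => hN₀top (Submodule.orthogonal_eq_bot_iff.mp h)
    obtain ⟨v₀, hv₀, hv₀0⟩ := (Submodule.ne_bot_iff _).mp horthne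
    have hv₀v₀ : (inner ℂ v₀ v₀ : ℂ) ≠ 0 := fun h => hv₀0 (inner_self_eq_zero.mp h)
    set lam : ℂ := (inner ℂ v₀ (W₀ v₀) : ℂ) / (inner ℂ v₀ v₀ : ℂ) with hlam
    have hWu₀ : W₀ u₀ = lam • u₀ :=
      div_smul _ _ _ _ hv₀v₀ (key N₀ hN₀ u₀ hu₀ v₀ hv₀ v₀)
    have claim : ∀ N ∈ 𝒩, N ≠ ⊤ → ∀ u ∈ N, W₀ u = lam • u := by
      intro N hN hNtop u hu
      rcases hchain N hN N₀ hN₀ with h | h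
      · exact div_smul _ _ _ _ hv₀v₀ (key N₀ hN₀ u (h hu) v₀ hv₀ v₀)
      · haveI : CompleteSpace N := (hclosed N hN).completeSpace_coe
        have horthne' : Nᗮ ≠ ⊥ := fun hh => hNtop (Submodule.orthogonal_eq_bot_iff.mp hh)
        obtain ⟨v, hvN, hv0⟩ := (Submodule.ne_bot_iff _).mp horthne'
        have hvv : (inner ℂ v v : ℂ) ≠ 0 := fun hh => hv0 (inner_self_eq_zero.mp hh)
        set mu : ℂ := (inner ℂ v (W₀ v) : ℂ) / (inner ℂ v v : ℂ) with hmu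
        have h1 : W₀ u = mu • u := div_smul _ _ _ _ hvv (key N hN u hu v hvN v)
        have h2 : W₀ u₀ = mu • u₀ := div_smul _ _ _ _ hvv (key N hN u₀ (h hu₀) v hvN v)
        have hmulam : mu = lam := by
          rw [hWu₀] at h2
          exact (smul_left_injective ℂ hu₀0 h2.symm)
        rw [h1, hmulam]
    -- density argument
    set K : Submodule ℂ H := LinearMap.ker ((W₀ - lam • (1 : H →L[ℂ] H) : H →L[ℂ] H) : H →ₗ[ℂ] H) with hK
    have hKc : IsClosed (K : Set H) := ContinuousLinearMap.isClosed_ker _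
    have hKmem : ∀ x : H, x ∈ K ↔ W₀ x = lam • x := by
      intro x
      rw [hK, LinearMap.mem_ker]
      constructor
      · intro hh
        have : W₀ x - lam • x = 0 := by
          simpa [ContinuousLinearMap.sub_apply, ContinuousLinearMap.smul_apply] using hh
        exact sub_eq_zero.mp this
      · intro hh
        simp [ContinuousLinearMap.sub_apply, ContinuousLinearMap.smul_apply, hh]
    have hsle : sSup S ≤ K := by
      apply sSup_le
      intro N hN
      intro x hx
      exact (hKmem x).2 (claim N hN.1 hN.2 x hx)
    have hcle : (sSup S).topologicalClosure ≤ K :=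
      Submodule.topologicalClosure_minimal _ hsle hKc
    rw [hM] at hcle
    refine ⟨lam, Subtype.ext ?_⟩
    ext x
    have : W₀ x = lam • x := (hKmem x).1 (hcle Submodule.mem_top)
    simpa using this
  · -- there is a largest proper element M₀ = closure (sSup S), and M₀ ≠ ⊤
    set M₀ : Submodule ℂ H := (sSup S).topologicalClosure with hM₀
    haveI : CompleteSpace M₀ := (Submodule.isClosed_topologicalClosure _).completeSpace_coe
    have horthne : M₀ᗮ ≠ ⊥ := fun h => hM (Submodule.orthogonal_eq_bot_iff.mp h)
    obtain ⟨v, hvM, hv0⟩ := (Submodule.ne_bot_iff _).mp horthne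
    have hvv : (inner ℂ v v : ℂ) ≠ 0 := fun h => hv0 (inner_self_eq_zero.mp h)
    set lam : ℂ := (inner ℂ v (W₀ v) : ℂ) / (inner ℂ v v : ℂ) with hlam
    have hvN : ∀ N ∈ 𝒩, N ≠ ⊤ → ∀ y ∈ N, (inner ℂ v y : ℂ) = 0 := by
      intro N hN hNtop y hy
      have hle : N ≤ M₀ :=
        le_trans (le_sSup (show N ∈ S from ⟨hN, hNtop⟩)) (Submodule.le_topologicalClosure _)
      exact (Submodule.mem_orthogonal' M₀ v).mp hvM y (hle hy)
    have step : ∀ u : H, (inner ℂ v u : ℂ) ≠ 0 → W₀ u = lam • u := by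
      intro u hvu
      set R : H →L[ℂ] H := (innerSL ℂ v).smulRight u with hRdef
      have hRapp : ∀ y, R y = (inner ℂ v y : ℂ) • u := fun _ => rfl
      have hRmemAlg : R ∈ nestAlg 𝒩 := by
        intro N hN y hy
        by_cases hNt : N = ⊤
        · rw [hNt]; exact Submodule.mem_top
        · rw [hRapp, hvN N hN hNt y hy, zero_smul]; exact N.zero_mem
      set c : ℂ := (inner ℂ v u : ℂ)⁻¹ with hc
      have hc0 : c ≠ 0 := inv_ne_zero hvu
      set E : H →L[ℂ] H := c • R with hEdef
      have hEmem : E ∈ nestAlg 𝒩 := Subalgebra.smul_mem _ hRmemAlg _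
      have hEapp : ∀ y, E y = (c * (inner ℂ v y : ℂ)) • u := fun y => by
        rw [hEdef]
        simp only [ContinuousLinearMap.smul_apply]
        rw [hRapp, smul_smul]
      have hEE : E * E = E := by
        ext y
        simp only [ContinuousLinearMap.mul_apply]
        rw [hEapp y, hEapp, inner_smul_right]
        have hcu : c * (inner ℂ v u : ℂ) = 1 := by rw [hc]; exact inv_mul_cancel₀ hvu
        congr 1
        linear_combination (c * (inner ℂ v y : ℂ)) * hcu
      have hWE := hcomm E hEmem hEE
      have happ : W₀ (E v) = E (W₀ v) := by
        have := congrArg (fun T : H →L[ℂ] H => T v) hWE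
        simpa [ContinuousLinearMap.mul_apply] using this
      rw [hEapp, hEapp, map_smul] at happ
      have h2 : (inner ℂ v v : ℂ) • W₀ u = (inner ℂ v (W₀ v) : ℂ) • u := by
        have := happ
        rw [mul_smul, mul_smul] at this
        exact smul_right_injective H hc0 this
      exact div_smul _ _ _ _ hvv h2
    have hall : ∀ u : H, W₀ u = lam • u := by
      intro u
      by_cases h : (inner ℂ v u : ℂ) = 0
      · have h1 := step (u + v) (by rw [inner_add_right, h, zero_add]; exact hvv)
        have h2 := step v hvv
        rw [map_add, h2, smul_add] at h1
        exact add_right_cancel h1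
      · exact step u h
    refine ⟨lam, Subtype.ext ?_⟩
    ext x
    simpa using hall x
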